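/- For every natural number k and every real x such that sin((k+1)x) ≠ 0 and sin(x + iπ/(k+1)) ≠ 0 for all 0 ≤ i ≤ k, one has (k+1)^2·cot^2((k+1)x) + (k+1)k = ∑_{i=0}^{k} cot^2(x + iπ/(k+1)). -/

import Mathlib

open Real Finset

private lemma exp_two_ne_one {t : ℝ} (h : Real.sin t ≠ 0) :
    Complex.exp (2 * t * Complex.I) ≠ 1 := by
  intro he
  apply h
  have h2 : Complex.exp ((t : ℂ) * Complex.I) * Complex.exp ((t : ℂ) * Complex.I) = 1 := by
    rw [← Complex.exp_add, ← he]; ring_nf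
  have h3 : Complex.exp (-((t : ℂ) * Complex.I)) = Complex.exp ((t : ℂ) * Complex.I) := by
    rw [Complex.exp_neg]
    exact inv_eq_of_mul_eq_one_right h2
  have hs : Complex.sin t = 0 := by
    rw [Complex.sin, neg_mul, h3]; ring
  have := Complex.ofReal_sin t ▸ hs
  exact_mod_cast this

private lemma cot_sq_formula {t : ℝ} (h : Real.sin t ≠ 0) :
    ((Real.cot t : ℂ)) ^ 2 =
      -(1 + 4 * (Complex.exp (2 * t * Complex.I) - 1)⁻¹
          + 4 * ((Complex.exp (2 * t * Complex.I) - 1)⁻¹) ^ 2) := by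
  set e : ℂ := Complex.exp (2 * t * Complex.I) with hedef
  have he : e - 1 ≠ 0 := sub_ne_zero.mpr (exp_two_ne_one h)
  have he' : Complex.I * (1 - e) ≠ 0 :=
    mul_ne_zero Complex.I_ne_zero
      (sub_ne_zero.mpr (Ne.symm (exp_two_ne_one h)))
  have h2 := Complex.cot_eq_exp_ratio (t : ℂ)
  rw [show 2 * Complex.I * (t : ℂ) = 2 * (t : ℂ) * Complex.I from by ring, ← hedef] at h2
  have h3 : Complex.cot t = Complex.I * (e + 1) / (e - 1) := by
    rw [h2]
    rw [div_eq_div_iff he' he]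
    linear_combination (-(e + 1) * (1 - e)) * Complex.I_sq
  rw [Complex.ofReal_cot, h3]
  have hsq : (Complex.I * (e + 1) / (e - 1)) ^ 2 = -((e + 1) / (e - 1)) ^ 2 := by
    rw [mul_div_assoc, mul_pow, Complex.I_sq]; ring
  rw [hsq, neg_inj]
  field_simp
  ring

private lemma sum_pow_root (n : ℕ) {ζ : ℂ} (hζ : IsPrimitiveRoot ζ n) (z : ℂ) (m : ℕ) :
    ∑ i ∈ Finset.range n, (z * ζ ^ i) ^ m = if n ∣ m then (n : ℂ) * z ^ m else 0 := by
  have key : ∑ i ∈ Finset.range n, (z * ζ ^ i) ^ m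
      = z ^ m * ∑ i ∈ Finset.range n, (ζ ^ m) ^ i := by
    rw [Finset.mul_sum]
    refine Finset.sum_congr rfl fun i _ => ?_
    rw [mul_pow, ← pow_mul, ← pow_mul, Nat.mul_comm]
  rw [key]
  by_cases hd : n ∣ m
  · rw [(hζ.pow_eq_one_iff_dvd m).mpr hd]
    simp [hd, mul_comm]
  · have hne : ζ ^ m ≠ 1 := fun hh => hd ((hζ.pow_eq_one_iff_dvd m).mp hh)
    rw [geom_sum_eq hne]
    have h1 : (ζ ^ m) ^ n = 1 := by
      rw [← pow_mul, mul_comm, pow_mul, hζ.pow_eq_one, one_pow]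
    rw [h1]
    simp [hd]

private lemma sum_ite_dvd (n : ℕ) (hn : n ≠ 0) (z : ℂ) :
    ∑ m ∈ Finset.range n, (if n ∣ m then (n : ℂ) * z ^ m else 0) = n := by
  have h : ∀ m ∈ Finset.range n, (if n ∣ m then (n : ℂ) * z ^ m else 0)
      = if m = 0 then (n : ℂ) else 0 := by
    intro m hm
    rw [Finset.mem_range] at hm
    by_cases h0 : m = 0
    · simp [h0]
    · have : ¬ n ∣ m := fun hd => absurd (Nat.le_of_dvd (Nat.pos_of_ne_zero h0) hd)
        (not_le.mpr hm)
      simp [this, h0]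
  rw [Finset.sum_congr rfl h, Finset.sum_ite_eq' (Finset.range n) 0 (fun _ => (n : ℂ))]
  simp [Nat.pos_of_ne_zero hn]

private lemma inv_term_eq (n : ℕ) {ζ : ℂ} (hζ : IsPrimitiveRoot ζ n) {z : ℂ}
    (hc : z ^ n ≠ 1) {i : ℕ} (hw : z * ζ ^ i ≠ 1) :
    (z * ζ ^ i - 1)⁻¹ = (∑ m ∈ Finset.range n, (z * ζ ^ i) ^ m) / (z ^ n - 1) := by
  have hwn : (z * ζ ^ i) ^ n = z ^ n := by
    rw [mul_pow, ← pow_mul, mul_comm i n, pow_mul, hζ.pow_eq_one, one_pow, mul_one]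
  have h1 : (∑ m ∈ Finset.range n, (z * ζ ^ i) ^ m) * (z * ζ ^ i - 1) = z ^ n - 1 := by
    rw [geom_sum_mul, hwn]
  have hc1 : z ^ n - 1 ≠ 0 := sub_ne_zero.mpr hc
  have hw1 : z * ζ ^ i - 1 ≠ 0 := sub_ne_zero.mpr hw
  rw [eq_div_iff hc1, ← h1]
  field_simp [hw1]

private lemma sum_S1 (n : ℕ) (hn : n ≠ 0) {ζ : ℂ} (hζ : IsPrimitiveRoot ζ n) {z : ℂ}
    (hc : z ^ n ≠ 1) (hw : ∀ i < n, z * ζ ^ i ≠ 1) :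
    ∑ i ∈ Finset.range n, (z * ζ ^ i - 1)⁻¹ = (n : ℂ) / (z ^ n - 1) := by
  have h1 : ∀ i ∈ Finset.range n, (z * ζ ^ i - 1)⁻¹
      = (∑ m ∈ Finset.range n, (z * ζ ^ i) ^ m) / (z ^ n - 1) := fun i hi =>
    inv_term_eq n hζ hc (hw i (Finset.mem_range.mp hi))
  rw [Finset.sum_congr rfl h1, ← Finset.sum_div]
  congr 1
  rw [Finset.sum_comm]
  calc ∑ m ∈ Finset.range n, ∑ i ∈ Finset.range n, (z * ζ ^ i) ^ m
      = ∑ m ∈ Finset.range n, (if n ∣ m then (n : ℂ) * z ^ m else 0) :=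
        Finset.sum_congr rfl fun m _ => sum_pow_root n hζ z m
    _ = n := sum_ite_dvd n hn z

private lemma sum_S2 (n : ℕ) (hn : n ≠ 0) {ζ : ℂ} (hζ : IsPrimitiveRoot ζ n) {z : ℂ}
    (hc : z ^ n ≠ 1) (hw : ∀ i < n, z * ζ ^ i ≠ 1) :
    ∑ i ∈ Finset.range n, ((z * ζ ^ i - 1)⁻¹) ^ 2
      = ((n : ℂ) + n * (n - 1) * z ^ n) / (z ^ n - 1) ^ 2 := by
  have h1 : ∀ i ∈ Finset.range n, ((z * ζ ^ i - 1)⁻¹) ^ 2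
      = (∑ m ∈ Finset.range n, ∑ m' ∈ Finset.range n, (z * ζ ^ i) ^ (m + m'))
          / (z ^ n - 1) ^ 2 := by
    intro i hi
    rw [inv_term_eq n hζ hc (hw i (Finset.mem_range.mp hi)), div_pow]
    congr 1
    rw [sq, Finset.sum_mul_sum]
    exact Finset.sum_congr rfl fun m _ => Finset.sum_congr rfl fun m' _ => (pow_add _ m m').symm
  rw [Finset.sum_congr rfl h1, ← Finset.sum_div]
  congr 1
  rw [Finset.sum_comm]
  have h2 : ∀ m ∈ Finset.range n, ∑ i ∈ Finset.range n,
      ∑ m' ∈ Finset.range n, (z * ζ ^ i) ^ (m + m') = ∑ m' ∈ Finset.range n,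
      (if n ∣ (m + m') then (n : ℂ) * z ^ (m + m') else 0) := by
    intro m _
    rw [Finset.sum_comm]
    exact Finset.sum_congr rfl fun m' _ => sum_pow_root n hζ z (m + m')
  rw [Finset.sum_congr rfl h2]
  have h3 : ∀ m ∈ Finset.range n, (∑ m' ∈ Finset.range n,
      (if n ∣ (m + m') then (n : ℂ) * z ^ (m + m') else 0))
      = if m = 0 then (n : ℂ) else (n : ℂ) * z ^ n := by
    intro m hm
    rw [Finset.mem_range] at hm
    by_cases h0 : m = 0
    · simp only [h0, zero_add, if_true]
      exact sum_ite_dvd n hn z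
    · rw [if_neg h0]
      have hmpos : 0 < m := Nat.pos_of_ne_zero h0
      have key := Finset.sum_eq_single_of_mem (s := Finset.range n)
        (f := fun m' => if n ∣ m + m' then (n : ℂ) * z ^ (m + m') else 0) (n - m)
        (Finset.mem_range.mpr (Nat.sub_lt (Nat.pos_of_ne_zero hn) hmpos)) ?_
      · rw [key]
        rw [Nat.add_sub_cancel' (Nat.le_of_lt hm), if_pos dvd_rfl]
      · intro m' hm' hne
        rw [Finset.mem_range] at hm'
        rw [if_neg]
        intro hd
        obtain ⟨c, hcc⟩ := hd
        have hc2 : c < 2 := by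
          by_contra hc2
          push_neg at hc2
          have : 2 * n ≤ n * c := by
            calc 2 * n = n * 2 := by ring
            _ ≤ n * c := Nat.mul_le_mul_left n hc2
          omega
        interval_cases c <;> omega
  rw [Finset.sum_congr rfl h3]
  have h4 : ∀ m ∈ Finset.range n, (if m = 0 then (n : ℂ) else (n : ℂ) * z ^ n)
      = (n : ℂ) * z ^ n + (if m = 0 then (n : ℂ) - (n : ℂ) * z ^ n else 0) := by
    intro m _
    by_cases h0 : m = 0 <;> simp [h0]
  rw [Finset.sum_congr rfl h4, Finset.sum_add_distrib, Finset.sum_const, Finset.card_range,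
    Finset.sum_ite_eq' (Finset.range n) 0 (fun _ => (n : ℂ) - (n : ℂ) * z ^ n),
    if_pos (Finset.mem_range.mpr (Nat.pos_of_ne_zero hn)), nsmul_eq_mul]
  ring

theorem cot_sq_multiple_sum (k : ℕ) (x : ℝ)
    (hx : Real.sin ((k + 1) * x) ≠ 0)
    (hxi : ∀ i : ℕ, i ≤ k → Real.sin (x + i * Real.pi / (k + 1)) ≠ 0) :
    (k + 1) ^ 2 * (Real.cot ((k + 1) * x)) ^ 2 + (k + 1) * k =
      ∑ i ∈ Finset.range (k + 1), (Real.cot (x + i * Real.pi / (k + 1))) ^ 2 := by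
  have hk : ((k : ℂ) + 1) ≠ 0 := Nat.cast_add_one_ne_zero k
  set n : ℕ := k + 1 with hndef
  have hn0 : n ≠ 0 := Nat.succ_ne_zero k
  set z : ℂ := Complex.exp (2 * (x : ℂ) * Complex.I) with hzdef
  set ζ : ℂ := Complex.exp (2 * (Real.pi : ℂ) * Complex.I / n) with hζdef
  have hζ : IsPrimitiveRoot ζ n := Complex.isPrimitiveRoot_exp n hn0
  have hzn : z ^ n = Complex.exp (2 * ((((k : ℝ) + 1) * x : ℝ) : ℂ) * Complex.I) := by
    rw [hzdef, ← Complex.exp_nat_mul]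
    congr 1
    push_cast [hndef]
    ring
  have hc : z ^ n ≠ 1 := by rw [hzn]; exact exp_two_ne_one hx
  have hc1 : z ^ n - 1 ≠ 0 := sub_ne_zero.mpr hc
  have hwi : ∀ i : ℕ, i < n →
      z * ζ ^ i = Complex.exp (2 * (((x + i * Real.pi / ((k : ℝ) + 1)) : ℝ) : ℂ) * Complex.I) := by
    intro i hi
    rw [hzdef, hζdef, ← Complex.exp_nat_mul, ← Complex.exp_add]
    congr 1
    push_cast [hndef]
    field_simp
  have hw1 : ∀ i < n, z * ζ ^ i ≠ 1 := by
    intro i hi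
    rw [hwi i hi]
    exact exp_two_ne_one (hxi i (Nat.lt_succ_iff.mp hi))
  apply Complex.ofReal_injective
  push_cast
  have hL := cot_sq_formula hx
  rw [← hzn] at hL
  push_cast at hL
  rw [hL]
  have hR : ∀ i ∈ Finset.range n, (Complex.cot ((x : ℂ) + (i : ℂ) * (Real.pi : ℂ) / ((k : ℂ) + 1))) ^ 2
      = -(1 + 4 * (z * ζ ^ i - 1)⁻¹ + 4 * ((z * ζ ^ i - 1)⁻¹) ^ 2) := by
    intro i hi
    rw [Finset.mem_range] at hi
    have h := cot_sq_formula (hxi i (Nat.lt_succ_iff.mp hi))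
    rw [← hwi i hi] at h
    push_cast at h
    exact h
  rw [Finset.sum_congr rfl hR]
  have hsum : ∑ i ∈ Finset.range n, -(1 + 4 * (z * ζ ^ i - 1)⁻¹ + 4 * ((z * ζ ^ i - 1)⁻¹) ^ 2)
      = -((n : ℂ) + 4 * ((n : ℂ) / (z ^ n - 1))
          + 4 * (((n : ℂ) + n * (n - 1) * z ^ n) / (z ^ n - 1) ^ 2)) := by
    rw [← sum_S1 n hn0 hζ hc hw1, ← sum_S2 n hn0 hζ hc hw1]
    rw [Finset.sum_neg_distrib, neg_inj, Finset.sum_add_distrib, Finset.sum_add_distrib,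
      Finset.sum_const, Finset.card_range, ← Finset.mul_sum, ← Finset.mul_sum,
      nsmul_eq_mul, mul_one]
  rw [hsum]
  have hnc : (n : ℂ) = (k : ℂ) + 1 := by push_cast [hndef]; ring
  rw [hnc]
  field_simp
  ring
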